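/- Let D ≥ 1 and let λ : Fin D → ℝ be nonnegative, nonincreasing (λ_i ≥ λ_j for i ≤ j), and normalized so that Σ_{i} λ_i² = 1. Then for every m with 1 ≤ m ≤ D: 1 − (1/m)·(Σ_{i<m} λ_i)² ≤ 1 − 1/D + λ_0²·(1 − m/D), where λ_0 is the largest entry. (This is the key estimate establishing the upper bound on the non-local trace distance of magic of a bipartite pure state with Schmidt coefficients λ_i in terms of its Schmidt rank D and largest Schmidt coefficient.) -/

import Mathlib

open scoped BigOperators

/-- Let `D ≥ 1` and `λ : Fin D → ℝ` be nonnegative, nonincreasing and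
normalized so that `Σ_i λ_i² = 1`. Then for every `m` with `1 ≤ m ≤ D`:
`1 − (1/m)·(Σ_{i<m} λ_i)² ≤ 1 − 1/D + λ_0²·(1 − m/D)`. -/
theorem schmidt_truncation_bound {D : ℕ} (hD : 1 ≤ D) (lam : Fin D → ℝ)
    (hnn : ∀ i, 0 ≤ lam i) (hmono : ∀ i j : Fin D, i ≤ j → lam j ≤ lam i)
    (hnorm : ∑ i, lam i ^ 2 = 1) (m : ℕ) (hm1 : 1 ≤ m) (hmD : m ≤ D) :
    1 - (1 / (m : ℝ)) *
        (∑ i ∈ Finset.univ.filter (fun i : Fin D => (i : ℕ) < m), lam i) ^ 2 ≤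
      1 - 1 / (D : ℝ) + (lam ⟨0, by omega⟩) ^ 2 * (1 - (m : ℝ) / (D : ℝ)) := by
  have hD0 : (0:ℝ) < D := by exact_mod_cast Nat.lt_of_lt_of_le Nat.zero_lt_one hD
  have hm0 : (0:ℝ) < m := by exact_mod_cast Nat.lt_of_lt_of_le Nat.zero_lt_one hm1
  have hmDr : (m:ℝ) ≤ D := by exact_mod_cast hmD
  set s := Finset.univ.filter (fun i : Fin D => (i : ℕ) < m) with hs
  set S := ∑ i ∈ s, lam i with hSdef
  set Q := ∑ i ∈ s, lam i ^ 2 with hQdef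
  have h0D : 0 < D := hD
  set l0 : ℝ := lam ⟨0, h0D⟩ with hl0def
  have hcard : s.card = m := by
    refine Finset.card_eq_of_bijective (fun j hj => ⟨j, lt_of_lt_of_le hj hmD⟩) ?_ ?_ ?_
    · intro a ha
      exact ⟨a, (Finset.mem_filter.mp ha).2, by simp⟩
    · intro j hj
      exact Finset.mem_filter.mpr ⟨Finset.mem_univ _, hj⟩
    · intro i j hi hj h
      simpa using congrArg Fin.val h
  have hmlt : m - 1 < D := by omega
  set μ : ℝ := lam ⟨m - 1, hmlt⟩ with hμdef
  have hμnn : 0 ≤ μ := hnn _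
  -- Q ≥ m μ²
  have hQge : (m:ℝ) * μ ^ 2 ≤ Q := by
    have : ∑ _i ∈ s, μ ^ 2 ≤ Q := by
      refine Finset.sum_le_sum fun i hi => ?_
      have hilt : (i:ℕ) < m := (Finset.mem_filter.mp hi).2
      have hle : lam ⟨m - 1, hmlt⟩ ≤ lam i := by
        refine hmono i ⟨m - 1, hmlt⟩ ?_
        simp only [Fin.le_def]
        omega
      exact pow_le_pow_left₀ hμnn hle 2
    simpa [Finset.sum_const, hcard, nsmul_eq_mul] using this
  -- tail ≤ (D - m) μ²
  have hcardc : sᶜ.card = D - m := by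
    rw [Finset.card_compl, hcard, Fintype.card_fin]
  have htail : ∑ i ∈ sᶜ, lam i ^ 2 ≤ ((D:ℝ) - m) * μ ^ 2 := by
    have h1 : ∑ i ∈ sᶜ, lam i ^ 2 ≤ ∑ _i ∈ sᶜ, μ ^ 2 := by
      refine Finset.sum_le_sum fun i hi => ?_
      have : ¬ ((i:ℕ) < m) := by
        intro h
        exact (Finset.mem_compl.mp hi) (Finset.mem_filter.mpr ⟨Finset.mem_univ _, h⟩)
      have hle : lam i ≤ lam ⟨m - 1, hmlt⟩ := by
        refine hmono ⟨m - 1, hmlt⟩ i ?_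
        simp only [Fin.le_def]
        omega
      exact pow_le_pow_left₀ (hnn i) hle 2
    have h2 : (∑ _i ∈ sᶜ, μ ^ 2 : ℝ) = ((D:ℝ) - m) * μ ^ 2 := by
      rw [Finset.sum_const, hcardc, nsmul_eq_mul]
      have : ((D - m : ℕ) : ℝ) = (D:ℝ) - m := by
        push_cast [hmD]
        ring
      rw [this]
    linarith
  have hsplit : Q + ∑ i ∈ sᶜ, lam i ^ 2 = 1 := by
    rw [hQdef, Finset.sum_add_sum_compl, hnorm]
  -- m ≤ D * Q
  have hDQ : (m:ℝ) ≤ (D:ℝ) * Q := by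
    nlinarith [mul_le_mul_of_nonneg_left htail (le_of_lt hm0),
      mul_le_mul_of_nonneg_left hQge (sub_nonneg.mpr hmDr)]
  -- Q ≤ S ^ 2
  have hS0 : 0 ≤ S := Finset.sum_nonneg fun i _ => hnn i
  have h0mem : (⟨0, h0D⟩ : Fin D) ∈ s :=
    Finset.mem_filter.mpr ⟨Finset.mem_univ _, by simpa using Nat.lt_of_lt_of_le Nat.zero_lt_one hm1⟩
  have hl0S : l0 ≤ S := Finset.single_le_sum (fun i _ => hnn i) h0mem
  have hQl0 : Q ≤ l0 * S := by
    rw [hSdef, Finset.mul_sum]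
    refine Finset.sum_le_sum fun i _ => ?_
    have hle : lam i ≤ l0 := hmono ⟨0, h0D⟩ i (Fin.le_def.mpr (Nat.zero_le _))
    have := mul_le_mul_of_nonneg_right hle (hnn i)
    nlinarith
  have hQS : Q ≤ S ^ 2 := by nlinarith [mul_le_mul_of_nonneg_right hl0S hS0]
  -- finish
  have hQm : 1 / (D:ℝ) ≤ 1 / (m:ℝ) * Q := by
    have h : (1:ℝ) / D ≤ Q / m := by
      rw [div_le_div_iff₀ hD0 hm0]
      linarith
    exact h.trans_eq (by ring)
  have hstep : (1 / (m:ℝ)) * Q ≤ (1 / (m:ℝ)) * S ^ 2 :=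
    mul_le_mul_of_nonneg_left hQS (by positivity)
  have hlast : 0 ≤ l0 ^ 2 * (1 - (m:ℝ) / D) := by
    refine mul_nonneg (sq_nonneg _) ?_
    rw [sub_nonneg, div_le_one hD0]
    exact hmDr
  linarith
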